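/- Let d ≥ 1, 0 < r₀ ≤ r₁, and let G ⊆ ℝ^d be a convex set with B₂(0, r₀) ⊆ G ⊆ B₂(0, r₁), where B₂(c, ρ) denotes the closed Euclidean ball of radius ρ centered at c. Let g ∈ ℝ^d with g ≠ 0, define G′ = { y ∈ G : ⟨g, y⟩ ≤ 0 } and x′ = −(r₀/2)·g/‖g‖₂. Then B₂(x′, r₀/2) ⊆ G′ and G′ ⊆ B₂(x′, r₀/2 + r₁). -/

import Mathlib

open scoped RealInnerProductSpace

/-- Sandwiching step of the efficient center-of-gravity method: after cutting a localizer
sandwiched between balls of radii `r₀` and `r₁` by a halfspace through the origin, the new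
localizer is sandwiched between balls of radii `r₀/2` and `r₀/2 + r₁` centered at `x'`. -/
theorem stmt_16 (d : ℕ) (hd : 1 ≤ d) (r₀ r₁ : ℝ) (hr₀ : 0 < r₀) (hr : r₀ ≤ r₁)
    (G : Set (EuclideanSpace ℝ (Fin d))) (hG : Convex ℝ G)
    (hGlow : Metric.closedBall (0 : EuclideanSpace ℝ (Fin d)) r₀ ⊆ G)
    (hGup : G ⊆ Metric.closedBall (0 : EuclideanSpace ℝ (Fin d)) r₁)
    (g : EuclideanSpace ℝ (Fin d)) (hg : g ≠ 0)
    (G' : Set (EuclideanSpace ℝ (Fin d))) (hG' : G' = {y ∈ G | ⟪g, y⟫ ≤ 0})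
    (x' : EuclideanSpace ℝ (Fin d)) (hx' : x' = -((r₀ / 2) • (‖g‖⁻¹ • g))) :
    Metric.closedBall x' (r₀ / 2) ⊆ G' ∧ G' ⊆ Metric.closedBall x' (r₀ / 2 + r₁) := by
  have hgnorm : (0:ℝ) < ‖g‖ := norm_pos_iff.mpr hg
  have hxnorm : ‖x'‖ = r₀ / 2 := by
    rw [hx', norm_neg, norm_smul, norm_smul, norm_inv, norm_norm,
      inv_mul_cancel₀ (ne_of_gt hgnorm)]
    rw [Real.norm_eq_abs, abs_div, abs_of_pos hr₀]; norm_num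
  have hip : ⟪g, x'⟫ = -(r₀ / 2 * ‖g‖) := by
    rw [hx', inner_neg_right, inner_smul_right, inner_smul_right,
      real_inner_self_eq_norm_sq]
    field_simp
  constructor
  · intro y hy
    rw [Metric.mem_closedBall, dist_eq_norm] at hy
    rw [hG']
    constructor
    · apply hGlow
      rw [Metric.mem_closedBall, dist_zero_right]
      calc ‖y‖ = ‖(y - x') + x'‖ := by rw [sub_add_cancel]
        _ ≤ ‖y - x'‖ + ‖x'‖ := norm_add_le _ _
        _ ≤ r₀ / 2 + r₀ / 2 := by rw [hxnorm]; linarith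
        _ = r₀ := by ring
    · have h1 : ⟪g, y⟫ = ⟪g, y - x'⟫ + ⟪g, x'⟫ := by
        rw [inner_sub_right]; ring
      have h2 : ⟪g, y - x'⟫ ≤ ‖g‖ * ‖y - x'‖ := real_inner_le_norm _ _
      have h3 : ‖g‖ * ‖y - x'‖ ≤ ‖g‖ * (r₀ / 2) :=
        mul_le_mul_of_nonneg_left hy (le_of_lt hgnorm)
      rw [h1, hip]; nlinarith
  · intro y hy
    rw [hG'] at hy
    have h1 : ‖y‖ ≤ r₁ := by
      have := hGup hy.1
      rwa [Metric.mem_closedBall, dist_zero_right] at this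
    rw [Metric.mem_closedBall, dist_eq_norm]
    calc ‖y - x'‖ ≤ ‖y‖ + ‖x'‖ := norm_sub_le _ _
      _ ≤ r₁ + r₀ / 2 := by rw [hxnorm]; linarith
      _ = r₀ / 2 + r₁ := by ring
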